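/- Let $u^1,u^2:[0,+\infty)\to\mathrm{Dom}\phi$ be continuous solutions of EVI$_\lambda$. Then $d(u^1_t,u^2_t)\le e^{-\lambda(t-s)}\,d(u^1_s,u^2_s)$ for every $0\le s<t<\infty$. In particular, for every initial datum $u_0\in\overline{\mathrm{Dom}\phi}$ there is at most one solution of EVI$_\lambda$ with $\lim_{t\downarrow0}u_t=u_0$. -/

import Mathlib

/-- Upper right Dini derivative, with values in `EReal`. -/
noncomputable def upperDiniDeriv (f : ℝ → ℝ) (t : ℝ) : EReal :=
  Filter.limsup (fun h => (((f (t + h) - f t) / h : ℝ) : EReal)) (nhdsWithin 0 (Set.Ioi 0))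

/-- `E_λ(t) = ∫₀ᵗ e^{λ r} dr`. -/
noncomputable def Elam (lam t : ℝ) : ℝ :=
  if lam = 0 then t else (Real.exp (lam * t) - 1) / lam

/-- The pointwise `EVI_λ` differential inequality at time `t`. -/
noncomputable def EVIineq {X : Type*} [MetricSpace X]
    (φ : X → EReal) (lam : ℝ) (u : ℝ → X) (t : ℝ) : Prop :=
  ∀ v : X, φ v ≠ ⊤ →
    ((1 / 2 : ℝ) : EReal) * upperDiniDeriv (fun s => dist (u s) v ^ 2) t +
      ((lam / 2 * dist (u t) v ^ 2 : ℝ) : EReal) ≤ φ v - φ (u t)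

/-- A solution of `EVI_λ` on `(0, ∞)`: a continuous curve with values in `Dom φ`
satisfying the `EVI_λ` differential inequality. -/
noncomputable def IsEVISolution {X : Type*} [MetricSpace X]
    (φ : X → EReal) (lam : ℝ) (u : ℝ → X) : Prop :=
  ContinuousOn u (Set.Ioi 0) ∧ (∀ t ∈ Set.Ioi (0:ℝ), φ (u t) ≠ ⊤) ∧
  ∀ t ∈ Set.Ioi (0:ℝ), EVIineq φ lam u t

namespace EVIhelp

noncomputable def gl (lam τ : ℝ) : ℝ := if lam = 0 then τ else (1 - Real.exp (-lam*τ))/lam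

lemma gl_zero (lam : ℝ) : gl lam 0 = 0 := by
  unfold gl; split_ifs with h <;> simp

lemma lam_mul_gl (lam τ : ℝ) : lam * gl lam τ = 1 - Real.exp (-lam*τ) := by
  unfold gl; split_ifs with h
  · simp [h]
  · field_simp

lemma gl_hasDerivAt (lam x : ℝ) : HasDerivAt (gl lam) (Real.exp (-lam*x)) x := by
  unfold gl
  split_ifs with h
  · simpa [h] using hasDerivAt_id' x
  · have h1 : HasDerivAt (fun τ : ℝ => -lam*τ) (-lam) x := by
      simpa using (hasDerivAt_id x).const_mul (-lam)
    have h2 : HasDerivAt (fun τ : ℝ => Real.exp (-lam*τ)) (Real.exp (-lam*x) * (-lam)) x := h1.exp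
    have h3 : HasDerivAt (fun τ : ℝ => (1 - Real.exp (-lam*τ))/lam)
        ((0 - Real.exp (-lam*x) * (-lam))/lam) x := ((hasDerivAt_const x 1).sub h2).div_const lam
    convert h3 using 1
    field_simp
    ring

lemma gl_nonneg {lam τ : ℝ} (h : 0 ≤ τ) : 0 ≤ gl lam τ := by
  unfold gl; split_ifs with hl
  · exact h
  · rcases lt_or_gt_of_ne hl with hneg | hpos
    · have h1 : (1:ℝ) ≤ Real.exp (-lam*τ) := Real.one_le_exp (by nlinarith)
      exact div_nonneg_of_nonpos (by linarith) (le_of_lt hneg)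
    · apply div_nonneg _ (le_of_lt hpos)
      have : Real.exp (-lam*τ) ≤ 1 := Real.exp_le_one_iff.2 (by nlinarith)
      linarith

lemma gl_le {lam τ : ℝ} (h0 : 0 ≤ τ) (h1 : τ ≤ 1) : gl lam τ ≤ τ * Real.exp |lam| := by
  have hexp1 : (1:ℝ) ≤ Real.exp |lam| := Real.one_le_exp (abs_nonneg lam)
  unfold gl; split_ifs with hl
  · nlinarith
  · rcases lt_or_gt_of_ne hl with hneg | hpos
    · rw [div_le_iff_of_neg hneg]
      have habs : |lam| = -lam := abs_of_neg hneg
      -- need : τ * exp|lam| * lam ≤ 1 - exp(-lam τ)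
      -- with x = -lam > 0 : e^{xτ} - 1 ≤ xτ e^{x}
      have hx : (0:ℝ) < -lam := by linarith
      have key1 : Real.exp (-lam*τ) - 1 ≤ (-lam*τ) * Real.exp (-lam*τ) := by
        have := Real.add_one_le_exp (-(-lam*τ))
        have hpos' : (0:ℝ) < Real.exp (-lam*τ) := Real.exp_pos _
        have hinv : Real.exp (-(-lam*τ)) * Real.exp (-lam*τ) = 1 := by
          rw [← Real.exp_add]; simp
        nlinarith
      have key2 : Real.exp (-lam*τ) ≤ Real.exp (-lam) := by
        apply Real.exp_le_exp.2; nlinarith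
      rw [habs]
      nlinarith [Real.exp_pos (-lam*τ), mul_nonneg (le_of_lt hx) h0]
    · rw [div_le_iff₀ hpos]
      have := Real.add_one_le_exp (-lam*τ)
      nlinarith [mul_nonneg (le_of_lt hpos) h0]

lemma exp_diff_le (x y : ℝ) : |Real.exp x - Real.exp y| ≤ Real.exp (max x y) * |x - y| := by
  rcases le_total y x with h | h
  · rw [abs_of_nonneg (sub_nonneg.2 (Real.exp_le_exp.2 h)), abs_of_nonneg (sub_nonneg.2 h),
      max_eq_left h]
    have h1 := Real.add_one_le_exp (y - x)
    have h2 : Real.exp (y-x) * Real.exp x = Real.exp y := by rw [← Real.exp_add]; ring_nf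
    nlinarith [Real.exp_pos x]
  · rw [abs_of_nonpos (sub_nonpos.2 (Real.exp_le_exp.2 h)), abs_of_nonpos (sub_nonpos.2 h),
      max_eq_right h]
    have h1 := Real.add_one_le_exp (x - y)
    have h2 : Real.exp (x-y) * Real.exp y = Real.exp x := by rw [← Real.exp_add]; ring_nf
    nlinarith [Real.exp_pos y]

lemma comp_lemma {f : ℝ → ℝ} {a b C lam : ℝ} (hab : a ≤ b)
    (hf : ContinuousOn f (Set.Icc a b))
    (hD : ∀ x ∈ Set.Ico a b, upperDiniDeriv f x ≤ ((C - lam * f x : ℝ) : EReal)) :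
    f b ≤ Real.exp (-lam*(b-a)) * f a + C * gl lam (b-a) := by
  set K := |lam| + 1 with hK
  have hKl : 0 < K + lam := by
    have := neg_abs_le lam; simp only [hK]; linarith
  have hslope : ∀ x ∈ Set.Ico a b, ∀ r, (C - lam * f x) < r →
      ∃ᶠ z in nhdsWithin x (Set.Ioi x), slope f x z < r := by
    intro x hx r hr
    have h1 : upperDiniDeriv f x < (r : EReal) :=
      lt_of_le_of_lt (hD x hx) (by exact_mod_cast hr)
    have h2 : ∀ᶠ h in nhdsWithin 0 (Set.Ioi (0:ℝ)),
        (((f (x + h) - f x)/h : ℝ) : EReal) < (r:EReal) :=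
      Filter.eventually_lt_of_limsup_lt h1
    have hmap : Filter.Tendsto (fun z : ℝ => z - x) (nhdsWithin x (Set.Ioi x))
        (nhdsWithin 0 (Set.Ioi 0)) := by
      refine tendsto_nhdsWithin_of_tendsto_nhds_of_eventually_within _ ?_ ?_
      · have h3 : Filter.Tendsto (fun z : ℝ => z - x) (nhds x) (nhds (x - x)) :=
          ((continuous_id.sub continuous_const).tendsto x)
        simpa using h3.mono_left nhdsWithin_le_nhds
      · filter_upwards [self_mem_nhdsWithin] with z hz
        exact sub_pos.2 (Set.mem_Ioi.1 hz)
    have h3 := hmap.eventually h2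
    have h4 : ∀ᶠ z in nhdsWithin x (Set.Ioi x), slope f x z < r := by
      filter_upwards [h3] with z hz
      rw [slope_def_field]
      have hxz : x + (z - x) = z := by ring
      rw [hxz] at hz
      exact_mod_cast hz
    exact h4.frequently
  have main : ∀ ε, 0 < ε → f b ≤ Real.exp (-lam*(b-a)) * f a + C * gl lam (b-a)
      + ε * Real.exp (K*(b-a)) := by
    intro ε hε
    set B : ℝ → ℝ := fun x => Real.exp (-lam*(x-a)) * f a + C * gl lam (x-a)
      + ε * Real.exp (K*(x-a)) with hB
    set B' : ℝ → ℝ := fun x => (-lam) * (Real.exp (-lam*(x-a)) * f a)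
      + C * Real.exp (-lam*(x-a)) + ε * (K * Real.exp (K*(x-a))) with hB'
    have hBd : ∀ x, HasDerivAt B (B' x) x := by
      intro x
      have e2 : HasDerivAt (fun x : ℝ => x - a) 1 x := (hasDerivAt_id x).sub_const a
      have e1 : HasDerivAt (fun x : ℝ => -lam*(x-a)) (-lam) x := by
        simpa using e2.const_mul (-lam)
      have h1 : HasDerivAt (fun x : ℝ => Real.exp (-lam*(x-a)))
          (Real.exp (-lam*(x-a)) * (-lam)) x := e1.exp
      have h2 : HasDerivAt (fun x : ℝ => gl lam (x-a)) (Real.exp (-lam*(x-a)) * 1) x :=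
        by have := HasDerivAt.comp x (gl_hasDerivAt lam (x-a)) e2; exact this
      have e3 : HasDerivAt (fun x : ℝ => K*(x-a)) K x := by simpa using e2.const_mul K
      have h3 : HasDerivAt (fun x : ℝ => Real.exp (K*(x-a))) (Real.exp (K*(x-a)) * K) x := e3.exp
      have h4 := ((h1.mul_const (f a)).add (h2.const_mul C)).add (h3.const_mul ε)
      refine h4.congr_deriv ?_
      simp only [hB']; ring
    have ha : f a ≤ B a := by
      simp only [hB, sub_self, mul_zero, gl_zero, Real.exp_zero]
      nlinarith
    have bound : ∀ x ∈ Set.Ico a b, f x = B x → C - lam * f x < B' x := by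
      intro x hx hfx
      have key : C * (lam * gl lam (x - a)) = C * (1 - Real.exp (-lam*(x-a))) := by
        rw [lam_mul_gl]
      have hpos : 0 < ε * (K + lam) * Real.exp (K*(x-a)) :=
        mul_pos (mul_pos hε hKl) (Real.exp_pos _)
      rw [hfx]
      simp only [hB, hB']
      nlinarith
    have := image_le_of_liminf_slope_right_lt_deriv_boundary
      (f' := fun x => C - lam * f x) hf hslope ha hBd bound (Set.right_mem_Icc.2 hab)
    simpa only [hB] using this
  -- let ε → 0
  apply le_of_forall_pos_le_add
  intro ε hε
  have hEpos : 0 < Real.exp (K*(b-a)) := Real.exp_pos _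
  have := main (ε / Real.exp (K*(b-a))) (by positivity)
  rwa [div_mul_cancel₀ _ (ne_of_gt hEpos)] at this

variable {X : Type*} [MetricSpace X] {φ : X → EReal} {lam : ℝ} {u : ℝ → X}

lemma contOn_dist_sq {s : Set ℝ} (h : ContinuousOn u s) (v : X) :
    ContinuousOn (fun r => dist (u r) v ^ 2) s :=
  (continuous_dist.comp_continuousOn (h.prodMk (continuousOn_const (c := v)))).pow 2

lemma evi_dini (hbot : ∀ y, φ y ≠ ⊥) (hu : IsEVISolution φ lam u) {t : ℝ} (ht : 0 < t)
    {v : X} (hv : φ v ≠ ⊤) :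
    upperDiniDeriv (fun s => dist (u s) v ^ 2) t ≤
      (((2*((φ v).toReal - (φ (u t)).toReal) - lam * dist (u t) v ^ 2 : ℝ)) : EReal) := by
  have hevi := hu.2.2 t ht v hv
  have hut : φ (u t) ≠ ⊤ := hu.2.1 t ht
  rw [show φ v = ((φ v).toReal : EReal) from (EReal.coe_toReal hv (hbot v)).symm,
      show φ (u t) = ((φ (u t)).toReal : EReal) from (EReal.coe_toReal hut (hbot (u t))).symm,
      ← EReal.coe_sub] at hevi
  revert hevi
  generalize upperDiniDeriv (fun s => dist (u s) v ^ 2) t = D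
  induction D using EReal.rec with
  | bot => intro _; exact bot_le
  | coe d =>
      intro hevi
      rw [← EReal.coe_mul, ← EReal.coe_add, EReal.coe_le_coe_iff] at hevi
      rw [EReal.coe_le_coe_iff]
      linarith
  | top =>
      intro hevi
      rw [EReal.mul_top_of_pos (by exact_mod_cast one_half_pos), EReal.top_add_coe,
        top_le_iff] at hevi
      exact absurd hevi (EReal.coe_ne_top _)

lemma phi_mono (hbot : ∀ y, φ y ≠ ⊥) (hlsc : LowerSemicontinuous φ)
    (hu : IsEVISolution φ lam u) {a b : ℝ} (ha : 0 < a) (hab : a ≤ b) :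
    φ (u b) ≤ φ (u a) := by
  by_contra hcon
  push_neg at hcon
  have hsub : Set.Icc a b ⊆ Set.Ioi 0 := fun x hx => lt_of_lt_of_le ha hx.1
  set S := {r ∈ Set.Icc a b | φ (u r) ≤ φ (u a)} with hS
  have hSsub : S ⊆ Set.Icc a b := fun r hr => hr.1
  have hSne : S.Nonempty := ⟨a, ⟨le_refl a, hab⟩, le_refl _⟩
  have hSbdd : BddAbove S := ⟨b, fun r hr => hr.1.2⟩
  set r₀ := sSup S with hr₀
  have hr₀mem : r₀ ∈ Set.Icc a b :=
    ⟨le_csSup hSbdd ⟨⟨le_refl a, hab⟩, le_refl _⟩, csSup_le hSne (fun r hr => hr.1.2)⟩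
  have hr₀pos : 0 < r₀ := lt_of_lt_of_le ha hr₀mem.1
  have hr₀S : φ (u r₀) ≤ φ (u a) := by
    by_contra hcc
    push_neg at hcc
    have hucont : ContinuousWithinAt u (Set.Icc a b) r₀ := (hu.1.mono hsub) r₀ hr₀mem
    have hlsc' : ∀ᶠ z in nhdsWithin r₀ (Set.Icc a b), φ (u a) < φ (u z) :=
      hucont.eventually (hlsc (u r₀) (φ (u a)) hcc)
    have hclos : r₀ ∈ closure S := csSup_mem_closure hSne hSbdd
    have hne : (nhdsWithin r₀ S).NeBot := mem_closure_iff_nhdsWithin_neBot.1 hclos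
    have h1 : ∀ᶠ z in nhdsWithin r₀ S, φ (u a) < φ (u z) :=
      hlsc'.filter_mono (nhdsWithin_mono _ hSsub)
    have h2 : ∀ᶠ z in nhdsWithin r₀ S, z ∈ S := eventually_mem_nhdsWithin
    obtain ⟨z, hz1, hz2⟩ := (h1.and h2).exists
    exact absurd hz2.2 (not_le.2 hz1)
  have hr₀b : r₀ < b := by
    rcases lt_or_eq_of_le hr₀mem.2 with h | h
    · exact h
    · exfalso; rw [h] at hr₀S; exact absurd hr₀S (not_le.2 hcon)
  set q : ℝ → ℝ := fun r => dist (u r) (u r₀) ^ 2 with hq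
  have hqc : ContinuousOn q (Set.Icc r₀ b) :=
    contOn_dist_sq ((hu.1.mono hsub).mono (Set.Icc_subset_Icc hr₀mem.1 (le_refl b))) (u r₀)
  have hD : ∀ x ∈ Set.Ico r₀ b, upperDiniDeriv q x ≤ ((0 - lam * q x : ℝ) : EReal) := by
    intro x hx
    have hx0 : 0 < x := lt_of_lt_of_le hr₀pos hx.1
    have hvne : φ (u r₀) ≠ ⊤ := hu.2.1 r₀ hr₀pos
    refine le_trans (evi_dini hbot hu hx0 hvne) ?_
    rw [EReal.coe_le_coe_iff]
    simp only [hq]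
    have hphix : (φ (u r₀)).toReal ≤ (φ (u x)).toReal := by
      rcases eq_or_lt_of_le hx.1 with heq | hlt
      · rw [← heq]
      · have hxnotS : x ∉ S := fun hmem => absurd (le_csSup hSbdd hmem) (not_le.2 hlt)
        have hxIcc : x ∈ Set.Icc a b := ⟨le_trans hr₀mem.1 (le_of_lt hlt), le_of_lt hx.2⟩
        have : φ (u a) < φ (u x) := by
          by_contra hc; push_neg at hc; exact hxnotS ⟨hxIcc, hc⟩
        exact EReal.toReal_le_toReal (le_of_lt (lt_of_le_of_lt hr₀S this))
          (hbot _) (hu.2.1 x hx0)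
    linarith
  have hcomp := comp_lemma (le_of_lt hr₀b) hqc hD
  have hqr₀ : q r₀ = 0 := by simp [hq]
  have hqb : q b ≤ 0 := by
    rw [hqr₀] at hcomp; simpa using hcomp
  have hqb' : dist (u b) (u r₀) ^ 2 ≤ 0 := by simpa [hq] using hqb
  have hdist : dist (u b) (u r₀) = 0 := by
    have h1 : 0 ≤ dist (u b) (u r₀) := dist_nonneg
    nlinarith
  have hub : u b = u r₀ := by rwa [dist_eq_zero] at hdist
  rw [hub] at hcon
  exact absurd hr₀S (not_le.2 hcon)

lemma star (hbot : ∀ y, φ y ≠ ⊥) (hlsc : LowerSemicontinuous φ)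
    (hu : IsEVISolution φ lam u) {v : X} (hv : φ v ≠ ⊤) {a b : ℝ} (ha : 0 < a) (hab : a ≤ b) :
    dist (u b) v ^ 2 ≤ Real.exp (-lam*(b-a)) * dist (u a) v ^ 2
      + (2*((φ v).toReal - (φ (u b)).toReal)) * gl lam (b-a) := by
  have hsub : Set.Icc a b ⊆ Set.Ioi 0 := fun x hx => lt_of_lt_of_le ha hx.1
  apply comp_lemma hab
  · exact contOn_dist_sq (hu.1.mono hsub) v
  · intro x hx
    have hx0 : 0 < x := lt_of_lt_of_le ha hx.1
    refine le_trans (evi_dini hbot hu hx0 hv) ?_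
    rw [EReal.coe_le_coe_iff]
    have hphix : (φ (u b)).toReal ≤ (φ (u x)).toReal :=
      EReal.toReal_le_toReal (phi_mono hbot hlsc hu hx0 (le_of_lt hx.2))
        (hbot _) (hu.2.1 x hx0)
    linarith

lemma step_abstract {lam s t p q f1q f2q f2p M : ℝ}
    (hs : 0 ≤ s) (hsp : s ≤ p) (hpq : p ≤ q) (hqt : q ≤ t) (hh1 : q - p ≤ 1)
    {Fqp Fpp Fqq : ℝ}
    (star1 : Fqp ≤ Real.exp (-lam*(q-p)) * Fpp + (2*(f2p - f1q)) * gl lam (q-p))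
    (star2 : Fqq ≤ Real.exp (-lam*(q-p)) * Fqp + (2*(f1q - f2q)) * gl lam (q-p))
    (hmono2 : f2q ≤ f2p) (hM1 : |f1q| ≤ M) (hM2 : |f2q| ≤ M) :
    Real.exp (2*lam*q) * Fqq - Real.exp (2*lam*p) * Fpp ≤
      2*(Real.exp |lam| * Real.exp (2* |lam| *t))*(f2p - f2q)*(q-p)
      + 2*(Real.exp |lam| * Real.exp (2* |lam| *t))* |lam| *(2*M)*(q-p)^2 := by
  have hM0 : 0 ≤ M := le_trans (abs_nonneg _) hM1
  set h := q - p with hh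
  have hh0 : 0 ≤ h := by simp only [hh]; linarith
  set G := gl lam h with hG
  set c1 := Real.exp |lam| with hc1
  set A := Real.exp (2* |lam| *t) with hA
  have hc1pos : 0 < c1 := Real.exp_pos _
  have hApos : 0 < A := Real.exp_pos _
  have hgl0 : 0 ≤ G := gl_nonneg hh0
  have hgl1 : G ≤ h * c1 := gl_le hh0 hh1
  have ht0 : 0 ≤ t := le_trans hs (le_trans hsp (le_trans hpq hqt))
  have hq0 : 0 ≤ q := le_trans hs (le_trans hsp hpq)
  have hp0 : 0 ≤ p := le_trans hs hsp
  set e := Real.exp (-lam*h) with he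
  set ab := Real.exp (lam*(p+q)) with habdef
  set bb := Real.exp (2*lam*q) with hbbdef
  have hab_pos : 0 < ab := Real.exp_pos _
  have hbb_pos : 0 < bb := Real.exp_pos _
  have hab : bb * e = ab := by
    rw [hbbdef, he, habdef, ← Real.exp_add]; congr 1; simp only [hh]; ring
  have hab2 : ab * e = Real.exp (2*lam*p) := by
    rw [habdef, he, ← Real.exp_add]; congr 1; simp only [hh]; ring
  have hexp1 : lam*(p+q) ≤ 2* |lam| *t := by
    calc lam*(p+q) ≤ |lam*(p+q)| := le_abs_self _
    _ = |lam| *|p+q| := abs_mul _ _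
    _ ≤ |lam| *(2*t) := by
        apply mul_le_mul_of_nonneg_left _ (abs_nonneg lam)
        rw [abs_of_nonneg (by linarith)]; linarith
    _ = 2* |lam| *t := by ring
  have hexp2 : 2*lam*q ≤ 2* |lam| *t := by
    calc 2*lam*q ≤ |2*lam*q| := le_abs_self _
    _ = 2* |lam| *|q| := by rw [abs_mul, abs_mul, abs_of_nonneg (by norm_num : (0:ℝ) ≤ 2)]
    _ ≤ 2* |lam| *t := by
        apply mul_le_mul_of_nonneg_left _ (by positivity)
        rwa [abs_of_nonneg hq0]
  have habA : ab ≤ A := Real.exp_le_exp.2 hexp1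
  have hbbA : bb ≤ A := Real.exp_le_exp.2 hexp2
  have hdiffbound : |bb - ab| ≤ A * (|lam| * h) := by
    calc |bb - ab| ≤ Real.exp (max (2*lam*q) (lam*(p+q))) * |2*lam*q - lam*(p+q)| :=
          exp_diff_le _ _
    _ ≤ A * (|lam| * h) := by
        apply mul_le_mul
        · exact Real.exp_le_exp.2 (max_le hexp2 hexp1)
        · have : 2*lam*q - lam*(p+q) = lam * h := by simp only [hh]; ring
          rw [this, abs_mul, abs_of_nonneg hh0]
        · exact abs_nonneg _
        · exact le_of_lt hApos
  -- combine the two star inequalities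
  have m1 : bb * Fqq ≤ ab * Fqp + bb*(2*(f1q - f2q))*G := by
    calc bb * Fqq ≤ bb * (e * Fqp + (2*(f1q - f2q)) * G) :=
          mul_le_mul_of_nonneg_left star2 hbb_pos.le
    _ = (bb * e) * Fqp + bb*(2*(f1q - f2q))*G := by ring
    _ = ab * Fqp + bb*(2*(f1q - f2q))*G := by rw [hab]
  have m2 : ab * Fqp ≤ Real.exp (2*lam*p) * Fpp + ab*(2*(f2p - f1q))*G := by
    calc ab * Fqp ≤ ab * (e * Fpp + (2*(f2p - f1q)) * G) :=
          mul_le_mul_of_nonneg_left star1 hab_pos.le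
    _ = (ab * e) * Fpp + ab*(2*(f2p - f1q))*G := by ring
    _ = Real.exp (2*lam*p) * Fpp + ab*(2*(f2p - f1q))*G := by rw [hab2]
  have m3 : bb * Fqq - Real.exp (2*lam*p) * Fpp ≤
      2*G*(ab*(f2p - f2q) + (bb - ab)*(f1q - f2q)) := by nlinarith [m1, m2]
  -- bound the inner bracket
  have i1 : ab*(f2p - f2q) ≤ A*(f2p - f2q) :=
    mul_le_mul_of_nonneg_right habA (by linarith)
  have i2 : (bb - ab)*(f1q - f2q) ≤ (A*(|lam| *h))*(2*M) := by
    calc (bb - ab)*(f1q - f2q) ≤ |(bb - ab)*(f1q - f2q)| := le_abs_self _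
    _ = |bb - ab| * |f1q - f2q| := abs_mul _ _
    _ ≤ (A*(|lam| *h))*(2*M) := by
        apply mul_le_mul hdiffbound _ (abs_nonneg _) (by positivity)
        calc |f1q - f2q| ≤ |f1q| + |f2q| := abs_sub _ _
        _ ≤ 2*M := by linarith
  have W0 : 0 ≤ A*(f2p - f2q) + (A*(|lam| *h))*(2*M) := by
    have : 0 ≤ A*(f2p - f2q) := mul_nonneg hApos.le (by linarith)
    have : 0 ≤ (A*(|lam| *h))*(2*M) := by positivity
    linarith
  have g2 : 2*G*(ab*(f2p - f2q) + (bb - ab)*(f1q - f2q)) ≤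
      2*(h*c1)*(A*(f2p - f2q) + (A*(|lam| *h))*(2*M)) := by
    have hinner : ab*(f2p - f2q) + (bb - ab)*(f1q - f2q) ≤
        A*(f2p - f2q) + (A*(|lam| *h))*(2*M) := add_le_add i1 i2
    calc 2*G*(ab*(f2p - f2q) + (bb - ab)*(f1q - f2q))
        ≤ 2*G*(A*(f2p - f2q) + (A*(|lam| *h))*(2*M)) :=
          mul_le_mul_of_nonneg_left hinner (by positivity)
    _ ≤ 2*(h*c1)*(A*(f2p - f2q) + (A*(|lam| *h))*(2*M)) :=
          mul_le_mul_of_nonneg_right (by linarith) W0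
  calc bb * Fqq - Real.exp (2*lam*p) * Fpp
      ≤ 2*(h*c1)*(A*(f2p - f2q) + (A*(|lam| *h))*(2*M)) := le_trans m3 g2
  _ = 2*(c1*A)*(f2p - f2q)*h + 2*(c1*A)* |lam| *(2*M)*h^2 := by ring

lemma contraction_pos (hbot : ∀ y, φ y ≠ ⊥) (hlsc : LowerSemicontinuous φ)
    (h1 : IsEVISolution φ lam u₁) (h2 : IsEVISolution φ lam u₂)
    {s t : ℝ} (hs : 0 < s) (hst : s < t) :
    Real.exp (2*lam*t) * dist (u₁ t) (u₂ t)^2 ≤ Real.exp (2*lam*s) * dist (u₁ s) (u₂ s)^2 := by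
  have ht0 : 0 < t := lt_trans hs hst
  set φ1 : ℝ → ℝ := fun r => (φ (u₁ r)).toReal with hφ1
  set φ2 : ℝ → ℝ := fun r => (φ (u₂ r)).toReal with hφ2
  have mono1 : ∀ p q : ℝ, 0 < p → p ≤ q → φ1 q ≤ φ1 p := fun p q hp hpq =>
    EReal.toReal_le_toReal (phi_mono hbot hlsc h1 hp hpq) (hbot _) (h1.2.1 p hp)
  have mono2 : ∀ p q : ℝ, 0 < p → p ≤ q → φ2 q ≤ φ2 p := fun p q hp hpq =>
    EReal.toReal_le_toReal (phi_mono hbot hlsc h2 hp hpq) (hbot _) (h2.2.1 p hp)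
  set M : ℝ := |φ1 s| + |φ1 t| + |φ2 s| + |φ2 t| with hM
  have hMb1 : ∀ r : ℝ, s ≤ r → r ≤ t → |φ1 r| ≤ M := by
    intro r hsr hrt
    have hA := mono1 s r hs hsr
    have hB := mono1 r t (lt_of_lt_of_le hs hsr) hrt
    rw [abs_le]
    constructor
    · nlinarith [neg_abs_le (φ1 t), abs_nonneg (φ1 s), abs_nonneg (φ2 s), abs_nonneg (φ2 t)]
    · nlinarith [le_abs_self (φ1 s), abs_nonneg (φ1 t), abs_nonneg (φ2 s), abs_nonneg (φ2 t)]
  have hMb2 : ∀ r : ℝ, s ≤ r → r ≤ t → |φ2 r| ≤ M := by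
    intro r hsr hrt
    have hA := mono2 s r hs hsr
    have hB := mono2 r t (lt_of_lt_of_le hs hsr) hrt
    rw [abs_le]
    constructor
    · nlinarith [neg_abs_le (φ2 t), abs_nonneg (φ2 s), abs_nonneg (φ1 s), abs_nonneg (φ1 t)]
    · nlinarith [le_abs_self (φ2 s), abs_nonneg (φ2 t), abs_nonneg (φ1 s), abs_nonneg (φ1 t)]
  set G : ℝ → ℝ := fun r => Real.exp (2*lam*r) * dist (u₁ r) (u₂ r)^2 with hG
  set c1A : ℝ := Real.exp |lam| * Real.exp (2 * |lam| * t) with hc1A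
  have step : ∀ p q : ℝ, s ≤ p → p ≤ q → q ≤ t → q - p ≤ 1 →
      G q - G p ≤ 2*c1A*(φ2 p - φ2 q)*(q-p) + 2*c1A * |lam| * (2*M)*(q-p)^2 := by
    intro p q hsp hpq hqt hh1
    have hp0 : 0 < p := lt_of_lt_of_le hs hsp
    have hq0 : 0 < q := lt_of_lt_of_le hp0 hpq
    have star1 := star hbot hlsc h1 (h2.2.1 p hp0) hp0 hpq (v := u₂ p)
    have star2 := star hbot hlsc h2 (h1.2.1 q hq0) hp0 hpq (v := u₁ q)
    rw [dist_comm (u₂ q) (u₁ q), dist_comm (u₂ p) (u₁ q)] at star2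
    exact step_abstract hs.le hsp hpq hqt hh1 star1 star2
      (mono2 p q hp0 hpq) (hMb1 q (le_trans hsp hpq) hqt)
      (hMb2 q (le_trans hsp hpq) hqt)
  by_contra hcon
  push_neg at hcon
  set δ := G t - G s with hδdef
  have hδ : 0 < δ := by rw [hδdef]; exact sub_pos.2 hcon
  set C₀ : ℝ := 2*c1A*(φ2 s - φ2 t) + 2*c1A * |lam| * (2*M)*(t-s) with hC₀
  obtain ⟨n, hn⟩ := exists_nat_gt (max (max ((C₀*(t-s))/δ) (t-s)) 1)
  have hn1 : (1:ℝ) < n := lt_of_le_of_lt (le_max_right _ _) hn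
  have npos : (0:ℝ) < n := lt_trans one_pos hn1
  have hnts : t - s ≤ n := le_of_lt (lt_of_le_of_lt (le_trans (le_max_right _ _) (le_max_left _ _)) hn)
  set h : ℝ := (t - s)/n with hhdef
  have hhpos : 0 < h := div_pos (by linarith) npos
  have hh1 : h ≤ 1 := (div_le_one npos).2 hnts
  have hnh : (n:ℝ)*h = t - s := by rw [hhdef]; field_simp
  set p : ℕ → ℝ := fun i => s + i*h with hp
  have hp0 : p 0 = s := by simp [hp]
  have hpn : p n = t := by simp only [hp]; rw [hnh]; ring
  have hdiff : ∀ i : ℕ, p (i+1) - p i = h := by intro i; simp only [hp]; push_cast; ring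
  have hps : ∀ i : ℕ, s ≤ p i := by
    intro i; simp only [hp]
    nlinarith [Nat.cast_nonneg (α := ℝ) i, hhpos]
  have hple : ∀ i : ℕ, i ≤ n → p i ≤ t := by
    intro i hi
    have : (i:ℝ) ≤ n := by exact_mod_cast hi
    simp only [hp]
    nlinarith
  have key : G t - G s = ∑ i ∈ Finset.range n, (G (p (i+1)) - G (p i)) := by
    rw [Finset.sum_range_sub (fun i => G (p i)) n, hpn, hp0]
  have bound : ∀ i ∈ Finset.range n, G (p (i+1)) - G (p i) ≤
      (2*c1A*h) * (φ2 (p i) - φ2 (p (i+1))) + 2*c1A * |lam| * (2*M)*h^2 := by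
    intro i hi
    have hi' : i + 1 ≤ n := Finset.mem_range.1 hi
    have hstep := step (p i) (p (i+1)) (hps i)
      (by rw [← sub_nonneg, hdiff]; exact hhpos.le)
      (hple (i+1) hi')
      (by rw [hdiff]; exact hh1)
    rw [hdiff] at hstep
    linarith [hstep]
  have total : G t - G s ≤ (2*c1A*h) * (φ2 s - φ2 t) + n*(2*c1A * |lam| * (2*M)*h^2) := by
    rw [key]
    calc ∑ i ∈ Finset.range n, (G (p (i+1)) - G (p i))
        ≤ ∑ i ∈ Finset.range n,
          ((2*c1A*h) * (φ2 (p i) - φ2 (p (i+1))) + 2*c1A * |lam| * (2*M)*h^2) :=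
          Finset.sum_le_sum bound
    _ = (∑ i ∈ Finset.range n, (2*c1A*h) * (φ2 (p i) - φ2 (p (i+1))))
        + n*(2*c1A * |lam| * (2*M)*h^2) := by
          rw [Finset.sum_add_distrib, Finset.sum_const, Finset.card_range, nsmul_eq_mul]
    _ = (2*c1A*h) * (φ2 s - φ2 t) + n*(2*c1A * |lam| * (2*M)*h^2) := by
          rw [← Finset.mul_sum, Finset.sum_range_sub' (fun i => φ2 (p i)) n, hpn, hp0]
  have hfin : δ ≤ C₀ * h := by
    have hn2 : (n:ℝ)*h^2 = (t-s)*h := by rw [sq, ← mul_assoc, hnh]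
    calc δ = G t - G s := rfl
    _ ≤ (2*c1A*h) * (φ2 s - φ2 t) + n*(2*c1A * |lam| * (2*M)*h^2) := total
    _ = (2*c1A*(φ2 s - φ2 t)) * h + (2*c1A * |lam| * (2*M))*((n:ℝ)*h^2) := by ring
    _ = (2*c1A*(φ2 s - φ2 t)) * h + (2*c1A * |lam| * (2*M))*((t-s)*h) := by rw [hn2]
    _ = C₀ * h := by rw [hC₀]; ring
  have hC₀h : C₀ * h < δ := by
    rcases le_or_gt (C₀*(t-s)) 0 with hle | hlt
    · have : C₀ * h = (C₀*(t-s))/n := by rw [hhdef]; ring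
      rw [this]
      exact lt_of_le_of_lt (div_nonpos_of_nonpos_of_nonneg hle npos.le) hδ
    · have h1 : (C₀*(t-s))/δ < n := lt_of_le_of_lt (le_trans (le_max_left _ _) (le_max_left _ _)) hn
      have h2 : C₀*(t-s) < n * δ := by
        rwa [div_lt_iff₀ hδ] at h1
        
      have : C₀ * h = (C₀*(t-s))/n := by rw [hhdef]; ring
      rw [this, div_lt_iff₀ npos]
      linarith
  linarith

lemma contraction_dist (hbot : ∀ y, φ y ≠ ⊥) (hlsc : LowerSemicontinuous φ)
    (h1 : IsEVISolution φ lam u₁) (h2 : IsEVISolution φ lam u₂)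
    {s t : ℝ} (hs : 0 < s) (hst : s < t) :
    dist (u₁ t) (u₂ t) ≤ Real.exp (-lam * (t - s)) * dist (u₁ s) (u₂ s) := by
  have H := contraction_pos hbot hlsc h1 h2 hs hst
  have e2 : Real.exp (2*lam*t) * ((Real.exp (-lam*(t-s)) * dist (u₁ s) (u₂ s))^2)
      = Real.exp (2*lam*s) * dist (u₁ s) (u₂ s)^2 := by
    rw [mul_pow, sq (Real.exp (-lam*(t-s))), ← Real.exp_add, ← mul_assoc, ← Real.exp_add]
    have harg : 2*lam*t + (-lam*(t-s) + -lam*(t-s)) = 2*lam*s := by ring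
    rw [harg]
  have hsq : dist (u₁ t) (u₂ t)^2 ≤ (Real.exp (-lam*(t-s)) * dist (u₁ s) (u₂ s))^2 := by
    have hpos : (0:ℝ) < Real.exp (2*lam*t) := Real.exp_pos _
    rw [← mul_le_mul_iff_right₀ hpos, e2]
    exact H
  have h3 := Real.sqrt_le_sqrt hsq
  rwa [Real.sqrt_sq dist_nonneg, Real.sqrt_sq (by positivity)] at h3

end EVIhelp

theorem stmt10 {X : Type*} [MetricSpace X] (φ : X → EReal) (lam : ℝ)
    (hbot : ∀ y, φ y ≠ ⊥) (hproper : ∃ y, φ y ≠ ⊤) (hlsc : LowerSemicontinuous φ) :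
    (∀ u₁ u₂ : ℝ → X,
      ContinuousOn u₁ (Set.Ici 0) → ContinuousOn u₂ (Set.Ici 0) →
      (∀ t ∈ Set.Ici (0:ℝ), φ (u₁ t) ≠ ⊤) → (∀ t ∈ Set.Ici (0:ℝ), φ (u₂ t) ≠ ⊤) →
      IsEVISolution φ lam u₁ → IsEVISolution φ lam u₂ →
      ∀ s t : ℝ, 0 ≤ s → s < t →
        dist (u₁ t) (u₂ t) ≤ Real.exp (-lam * (t - s)) * dist (u₁ s) (u₂ s)) ∧
    (∀ u₀ : X, u₀ ∈ closure {y : X | φ y ≠ ⊤} →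
      ∀ u v : ℝ → X, IsEVISolution φ lam u → IsEVISolution φ lam v →
        Filter.Tendsto u (nhdsWithin 0 (Set.Ioi 0)) (nhds u₀) →
        Filter.Tendsto v (nhdsWithin 0 (Set.Ioi 0)) (nhds u₀) →
        ∀ t ∈ Set.Ioi (0:ℝ), u t = v t) := by
  constructor
  · intro u₁ u₂ hc1 hc2 _ _ hS1 hS2 s t hs hst
    rcases hs.eq_or_lt with heq | hpos
    · subst heq
      have hd : Filter.Tendsto (fun r => dist (u₁ r) (u₂ r)) (nhdsWithin 0 (Set.Ici 0))
          (nhds (dist (u₁ 0) (u₂ 0))) :=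
        Filter.Tendsto.dist (hc1 0 Set.self_mem_Ici) (hc2 0 Set.self_mem_Ici)
      have he : Filter.Tendsto (fun r : ℝ => Real.exp (-lam * (t - r)))
          (nhdsWithin 0 (Set.Ici 0)) (nhds (Real.exp (-lam * (t - 0)))) := by
        have hcont : Continuous (fun r : ℝ => Real.exp (-lam * (t - r))) := by continuity
        exact (hcont.tendsto 0).mono_left nhdsWithin_le_nhds
      have hlim : Filter.Tendsto (fun r : ℝ => Real.exp (-lam * (t - r)) * dist (u₁ r) (u₂ r))
          (nhdsWithin 0 (Set.Ioi 0))
          (nhds (Real.exp (-lam * (t - 0)) * dist (u₁ 0) (u₂ 0))) :=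
        (he.mul hd).mono_left (nhdsWithin_mono 0 Set.Ioi_subset_Ici_self)
      apply ge_of_tendsto hlim
      filter_upwards [Ioo_mem_nhdsGT_of_mem (Set.left_mem_Ico.2 hst)] with r hr
      exact EVIhelp.contraction_dist hbot hlsc hS1 hS2 hr.1 hr.2
    · exact EVIhelp.contraction_dist hbot hlsc hS1 hS2 hpos hst
  · intro u₀ _ u v hu hv hut hvt t ht
    rw [Set.mem_Ioi] at ht
    have hd : Filter.Tendsto (fun r => dist (u r) (v r)) (nhdsWithin 0 (Set.Ioi 0))
        (nhds (dist u₀ u₀)) := Filter.Tendsto.dist hut hvt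
    rw [dist_self] at hd
    have he : Filter.Tendsto (fun r : ℝ => Real.exp (-lam * (t - r)))
        (nhdsWithin 0 (Set.Ioi 0)) (nhds (Real.exp (-lam * (t - 0)))) := by
      have hcont : Continuous (fun r : ℝ => Real.exp (-lam * (t - r))) := by continuity
      exact (hcont.tendsto 0).mono_left nhdsWithin_le_nhds
    have hlim : Filter.Tendsto (fun r : ℝ => Real.exp (-lam * (t - r)) * dist (u r) (v r))
        (nhdsWithin 0 (Set.Ioi 0)) (nhds (Real.exp (-lam * (t - 0)) * 0)) := he.mul hd
    rw [mul_zero] at hlim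
    have hle : dist (u t) (v t) ≤ 0 := by
      apply ge_of_tendsto hlim
      filter_upwards [Ioo_mem_nhdsGT_of_mem (Set.left_mem_Ico.2 ht)] with r hr
      exact EVIhelp.contraction_dist hbot hlsc hu hv hr.1 hr.2
    exact dist_le_zero.1 hle
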